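/- Let M_0 be a subset of Z^* of cardinality d (so d ≤ z), and let d' be an integer. Then ∑_N (−1)^{card(N ∩ Z_*) + card(N ∩ M_0)} = (−1)^{d'} · ∑_{l=0}^{z−d} (−1)^l C(z − d, l) · C(z' + d, l + d − d'), where the first sum runs over all subsets N of Z with card(N ∩ Z^*) = card(N ∩ Z_*) + d' (equality of integers). -/

import Mathlib

/-- Binomial coefficient `C(m, a)` with an integer lower argument: it is `0`
unless `0 ≤ a`, and equals the usual binomial coefficient otherwise
(which is itself `0` when `a > m`). -/
def intChoose (m : ℕ) (a : ℤ) : ℤ := if 0 ≤ a then (m.choose a.toNat : ℤ) else 0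

lemma intChoose_neg {m : ℕ} {a : ℤ} (h : a < 0) : intChoose m a = 0 := by
  simp [intChoose, not_le.2 h]

lemma intChoose_succ (m : ℕ) (a : ℤ) :
    intChoose (m + 1) a = intChoose m (a - 1) + intChoose m a := by
  rcases lt_trichotomy a 0 with h | h | h
  · rw [intChoose_neg h, intChoose_neg h, intChoose_neg (by omega)]; ring
  · subst h; simp [intChoose]
  · obtain ⟨k, rfl⟩ : ∃ k : ℕ, a = (k : ℤ) + 1 := ⟨(a - 1).toNat, by omega⟩
    have h1 : ((k : ℤ) + 1).toNat = k + 1 := by omega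
    have h2 : ((k : ℤ) + 1 - 1).toNat = k := by omega
    simp only [intChoose, if_pos (by omega : (0:ℤ) ≤ (k:ℤ)+1),
      if_pos (by omega : (0:ℤ) ≤ (k:ℤ)+1-1), h1, h2, Nat.choose_succ_succ']
    push_cast
    ring

lemma vandermonde_int (n d : ℕ) : ∀ t : ℤ,
    ∑ a ∈ Finset.range (d + 1), (d.choose a : ℤ) * intChoose n ((a : ℤ) + t)
      = intChoose (n + d) ((d : ℤ) + t) := by
  induction d with
  | zero => intro t; simp
  | succ d ih =>
    intro t
    have h2 : (∑ x ∈ Finset.range (d+1), (d.choose (x+1) : ℤ) * intChoose n ((x:ℤ) + (1+t)))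
        + intChoose n t
        = ∑ a ∈ Finset.range (d+1), (d.choose a : ℤ) * intChoose n ((a:ℤ) + t) := by
      have h3 := Finset.sum_range_succ'
        (fun a => (d.choose a : ℤ) * intChoose n ((a : ℤ) + t)) (d+1)
      simp only [Nat.cast_add, Nat.cast_one, Nat.cast_zero, zero_add, add_assoc,
        Nat.choose_zero_right, one_mul] at h3
      rw [← h3, show d+(1+1) = d+1+1 from rfl, Finset.sum_range_succ]
      simp [Nat.choose_succ_self]
    rw [Finset.sum_range_succ'
      (fun a => (((d+1).choose a : ℕ) : ℤ) * intChoose n ((a : ℤ) + t)) (d+1)]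
    simp only [Nat.choose_succ_succ', Nat.cast_add, Nat.cast_one, Nat.cast_zero, zero_add,
      add_mul, one_mul, Nat.choose_zero_right, add_assoc]
    rw [Finset.sum_add_distrib, add_assoc, h2, ih, ih, show n + (d+1) = (n+d) + 1 from rfl, intChoose_succ, add_comm]
    congr 2
    ring

lemma sum_powerset_union_disj {α β : Type*} [DecidableEq α] [AddCommMonoid β]
    {s t : Finset α} (h : Disjoint s t) (f : Finset α → β) :
    ∑ N ∈ (s ∪ t).powerset, f N = ∑ A ∈ s.powerset, ∑ B ∈ t.powerset, f (A ∪ B) := by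
  rw [← Finset.sum_product']
  refine Finset.sum_nbij' (i := fun N => (N ∩ s, N ∩ t)) (j := fun p => p.1 ∪ p.2)
    ?_ ?_ ?_ ?_ ?_
  · intro N hN
    simp only [Finset.mem_product, Finset.mem_powerset]
    exact ⟨Finset.inter_subset_right, Finset.inter_subset_right⟩
  · intro p hp
    simp only [Finset.mem_product, Finset.mem_powerset] at hp ⊢
    exact Finset.union_subset_union hp.1 hp.2
  · intro N hN
    simp only [Finset.mem_powerset] at hN
    show N ∩ s ∪ N ∩ t = N
    rw [← Finset.inter_union_distrib_left, Finset.inter_eq_left.2 hN]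
  · intro p hp
    simp only [Finset.mem_product, Finset.mem_powerset] at hp
    have h1 : p.1 ∩ s = p.1 := Finset.inter_eq_left.2 hp.1
    have h2 : p.2 ∩ s = ∅ :=
      Finset.disjoint_iff_inter_eq_empty.1 (h.symm.mono_left hp.2)
    have h3 : p.1 ∩ t = ∅ :=
      Finset.disjoint_iff_inter_eq_empty.1 (h.mono_left hp.1)
    have h4 : p.2 ∩ t = p.2 := Finset.inter_eq_left.2 hp.2
    show ((p.1 ∪ p.2) ∩ s, (p.1 ∪ p.2) ∩ t) = p
    rw [Finset.union_inter_distrib_right, Finset.union_inter_distrib_right,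
      h1, h2, h3, h4, Finset.union_empty, Finset.empty_union]
  · intro N hN
    show f N = f (N ∩ s ∪ N ∩ t)
    rw [← Finset.inter_union_distrib_left,
      Finset.inter_eq_left.2 (Finset.mem_powerset.1 hN)]

lemma inner_c_sum (z' a b : ℕ) (d' : ℤ) :
    (∑ c ∈ Finset.range (z' + 1), (z'.choose c : ℤ) *
        (if ((a : ℤ) + b = (c : ℤ) + d') then (-1 : ℤ) ^ (c + a) else 0))
      = (-1 : ℤ) ^ b * (d'.negOnePow : ℤ) * intChoose z' ((a : ℤ) + ((b : ℤ) - d')) := by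
  set e : ℤ := (a : ℤ) + ((b : ℤ) - d') with he
  by_cases hpos : 0 ≤ e
  · by_cases hle : e.toNat ≤ z'
    · rw [Finset.sum_eq_single e.toNat]
      · rw [if_pos (by omega)]
        have h1 : ((e.toNat + a : ℕ) : ℤ) = 2 * a + ((b : ℤ) - d') := by push_cast; omega
        have h2 : intChoose z' e = (z'.choose e.toNat : ℤ) := by
          rw [intChoose, if_pos hpos]
        rw [h2, ← Int.coe_negOnePow_natCast, h1, Int.negOnePow_add, Int.negOnePow_two_mul,
          Int.negOnePow_sub, one_mul, Units.val_mul, Int.coe_negOnePow_natCast]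
        ring
      · intro c _ hc
        rw [if_neg (by omega), mul_zero]
      · intro hmem
        exact absurd (Finset.mem_range.2 (by omega)) hmem
    · rw [Finset.sum_eq_zero, show intChoose z' e = 0 from ?_]
      · ring
      · rw [intChoose, if_pos hpos, Nat.choose_eq_zero_of_lt (by omega), Nat.cast_zero]
      · intro c hc
        rw [if_neg (by simp only [Finset.mem_range] at hc; omega), mul_zero]
  · rw [Finset.sum_eq_zero, intChoose_neg (by omega)]
    · ring
    · intro c hc
      rw [if_neg (by omega), mul_zero]

lemma arith (d zd z' : ℕ) (d' : ℤ) :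
    (∑ a ∈ Finset.range (d + 1), (d.choose a : ℤ) *
      ∑ b ∈ Finset.range (zd + 1), (zd.choose b : ℤ) *
        ∑ c ∈ Finset.range (z' + 1), (z'.choose c : ℤ) *
          (if ((a : ℤ) + b = (c : ℤ) + d') then (-1 : ℤ) ^ (c + a) else 0))
    = (d'.negOnePow : ℤ) * ∑ l ∈ Finset.range (zd + 1),
        (-1 : ℤ) ^ l * (zd.choose l : ℤ) * intChoose (z' + d) ((l : ℤ) + d - d') := by
  have step1 : ∀ a ∈ Finset.range (d + 1),
      ((d.choose a : ℤ) *
        ∑ b ∈ Finset.range (zd + 1), (zd.choose b : ℤ) *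
          ∑ c ∈ Finset.range (z' + 1), (z'.choose c : ℤ) *
            (if ((a : ℤ) + b = (c : ℤ) + d') then (-1 : ℤ) ^ (c + a) else 0))
      = ∑ b ∈ Finset.range (zd + 1), (-1 : ℤ) ^ b * (zd.choose b : ℤ) * (d'.negOnePow : ℤ) *
          ((d.choose a : ℤ) * intChoose z' ((a : ℤ) + ((b : ℤ) - d'))) := by
    intro a _
    rw [Finset.mul_sum]
    refine Finset.sum_congr rfl fun b _ => ?_
    rw [inner_c_sum]
    ring
  rw [Finset.sum_congr rfl step1, Finset.sum_comm, Finset.mul_sum]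
  refine Finset.sum_congr rfl fun b _ => ?_
  rw [← Finset.mul_sum, vandermonde_int z' d ((b : ℤ) - d')]
  rw [show (d : ℤ) + ((b : ℤ) - d') = (b : ℤ) + d - d' by ring]
  ring

set_option maxHeartbeats 1000000 in
theorem stmt_7 {α : Type*} [DecidableEq α] [Fintype α]
    (Zstar Zsub : Finset α) (hdisj : Disjoint Zstar Zsub)
    (hunion : Zstar ∪ Zsub = Finset.univ)
    (z z' : ℕ) (hz : Zstar.card = z) (hz' : Zsub.card = z')
    (M0 : Finset α) (hM0 : M0 ⊆ Zstar) (d : ℕ) (hd : M0.card = d)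
    (d' : ℤ) :
    ∑ N ∈ Finset.univ.filter (fun N : Finset α =>
        ((N ∩ Zstar).card : ℤ) = ((N ∩ Zsub).card : ℤ) + d'),
      (-1 : ℤ) ^ ((N ∩ Zsub).card + (N ∩ M0).card)
      = (d'.negOnePow : ℤ) *
          ∑ l ∈ Finset.range (z - d + 1),
            (-1 : ℤ) ^ l * ((z - d).choose l : ℤ) * intChoose (z' + d) ((l : ℤ) + d - d') := by
  classical
  subst hz hz' hd
  set S : Finset α := Zstar \ M0 with hS
  have hMS : Disjoint M0 S := Finset.disjoint_sdiff
  have hZS : M0 ∪ S = Zstar := Finset.union_sdiff_of_subset hM0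
  have hdisj2 : Disjoint (M0 ∪ S) Zsub := hZS ▸ hdisj
  have hcardS : S.card = Zstar.card - M0.card := Finset.card_sdiff_of_subset hM0
  have hkey : ∀ g : ℕ → ℤ, ∀ x : Finset α,
      ∑ C ∈ x.powerset, g C.card
        = ∑ c ∈ Finset.range (x.card + 1), (x.card.choose c : ℤ) * g c := by
    intro g x
    rw [Finset.sum_powerset_apply_card]
    exact Finset.sum_congr rfl fun c _ => by rw [nsmul_eq_mul]
  rw [Finset.sum_filter, show (Finset.univ : Finset (Finset α))
      = (Finset.univ : Finset α).powerset from (Finset.powerset_univ).symm,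
    show ((Finset.univ : Finset α)) = (M0 ∪ S) ∪ Zsub by rw [hZS, hunion],
    sum_powerset_union_disj hdisj2, sum_powerset_union_disj hMS]
  have step2 : ∀ A ∈ M0.powerset, ∀ B ∈ S.powerset, ∀ C ∈ Zsub.powerset,
      (if (((A ∪ B ∪ C) ∩ Zstar).card : ℤ) = (((A ∪ B ∪ C) ∩ Zsub).card : ℤ) + d' then
          (-1 : ℤ) ^ (((A ∪ B ∪ C) ∩ Zsub).card + ((A ∪ B ∪ C) ∩ M0).card) else 0)
        = (if ((A.card : ℤ) + B.card = (C.card : ℤ) + d') then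
            (-1 : ℤ) ^ (C.card + A.card) else 0) := by
    intro A hA B hB C hC
    rw [Finset.mem_powerset] at hA hB hC
    have hAZ : A ⊆ Zstar := hA.trans hM0
    have hBZ : B ⊆ Zstar := hB.trans (Finset.sdiff_subset)
    have e1 : (A ∪ B ∪ C) ∩ Zstar = A ∪ B := by
      rw [Finset.union_inter_distrib_right, Finset.union_inter_distrib_right,
        Finset.inter_eq_left.2 hAZ, Finset.inter_eq_left.2 hBZ,
        Finset.disjoint_iff_inter_eq_empty.1 (hdisj.symm.mono_left hC), Finset.union_empty]
    have e2 : (A ∪ B ∪ C) ∩ Zsub = C := by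
      rw [Finset.union_inter_distrib_right, Finset.union_inter_distrib_right,
        Finset.disjoint_iff_inter_eq_empty.1 (hdisj.mono_left hAZ),
        Finset.disjoint_iff_inter_eq_empty.1 (hdisj.mono_left hBZ),
        Finset.inter_eq_left.2 hC, Finset.union_empty, Finset.empty_union]
    have e3 : (A ∪ B ∪ C) ∩ M0 = A := by
      rw [Finset.union_inter_distrib_right, Finset.union_inter_distrib_right,
        Finset.inter_eq_left.2 hA,
        Finset.disjoint_iff_inter_eq_empty.1 ((Finset.sdiff_disjoint).mono_left hB),
        Finset.disjoint_iff_inter_eq_empty.1 ((hdisj.symm.mono_right hM0).mono_left hC),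
        Finset.union_empty, Finset.union_empty]
    rw [e1, e2, e3, Finset.card_union_of_disjoint (hMS.mono hA hB)]
    push_cast
    rfl
  calc (∑ A ∈ M0.powerset, ∑ B ∈ S.powerset, ∑ C ∈ Zsub.powerset,
          if (((A ∪ B ∪ C) ∩ Zstar).card : ℤ) = (((A ∪ B ∪ C) ∩ Zsub).card : ℤ) + d' then
            (-1 : ℤ) ^ (((A ∪ B ∪ C) ∩ Zsub).card + ((A ∪ B ∪ C) ∩ M0).card) else 0)
      = ∑ A ∈ M0.powerset, ∑ B ∈ S.powerset, ∑ C ∈ Zsub.powerset,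
          (if ((A.card : ℤ) + B.card = (C.card : ℤ) + d') then
            (-1 : ℤ) ^ (C.card + A.card) else 0) := by
        refine Finset.sum_congr rfl fun A hA => Finset.sum_congr rfl fun B hB =>
          Finset.sum_congr rfl fun C hC => step2 A hA B hB C hC
    _ = ∑ A ∈ M0.powerset, ∑ B ∈ S.powerset,
          ∑ c ∈ Finset.range (Zsub.card + 1), (Zsub.card.choose c : ℤ) *
            (if ((A.card : ℤ) + B.card = (c : ℤ) + d') then
              (-1 : ℤ) ^ (c + A.card) else 0) := by
        refine Finset.sum_congr rfl fun A _ => Finset.sum_congr rfl fun B _ => ?_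
        exact hkey (fun c => if ((A.card : ℤ) + B.card = (c : ℤ) + d') then
          (-1 : ℤ) ^ (c + A.card) else 0) Zsub
    _ = ∑ A ∈ M0.powerset,
          ∑ b ∈ Finset.range (S.card + 1), (S.card.choose b : ℤ) *
            ∑ c ∈ Finset.range (Zsub.card + 1), (Zsub.card.choose c : ℤ) *
              (if ((A.card : ℤ) + b = (c : ℤ) + d') then
                (-1 : ℤ) ^ (c + A.card) else 0) := by
        refine Finset.sum_congr rfl fun A _ => ?_
        exact hkey (fun b => ∑ c ∈ Finset.range (Zsub.card + 1), (Zsub.card.choose c : ℤ) *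
          (if ((A.card : ℤ) + b = (c : ℤ) + d') then (-1 : ℤ) ^ (c + A.card) else 0)) S
    _ = ∑ a ∈ Finset.range (M0.card + 1), (M0.card.choose a : ℤ) *
          ∑ b ∈ Finset.range (S.card + 1), (S.card.choose b : ℤ) *
            ∑ c ∈ Finset.range (Zsub.card + 1), (Zsub.card.choose c : ℤ) *
              (if ((a : ℤ) + b = (c : ℤ) + d') then (-1 : ℤ) ^ (c + a) else 0) := by
        exact hkey (fun a => ∑ b ∈ Finset.range (S.card + 1), (S.card.choose b : ℤ) *
          ∑ c ∈ Finset.range (Zsub.card + 1), (Zsub.card.choose c : ℤ) *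
            (if ((a : ℤ) + b = (c : ℤ) + d') then (-1 : ℤ) ^ (c + a) else 0)) M0
    _ = (d'.negOnePow : ℤ) *
          ∑ l ∈ Finset.range (Zstar.card - M0.card + 1),
            (-1 : ℤ) ^ l * ((Zstar.card - M0.card).choose l : ℤ) *
              intChoose (Zsub.card + M0.card) ((l : ℤ) + M0.card - d') := by
        rw [← hcardS]
        exact arith M0.card S.card Zsub.card d'
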